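/- There exists a constant C such that for every n ≥ 1 there is a 1-layer single-token output transformer for input length n and alphabet {0,1}, with embedding dimension d ≤ C and whose output function 𝒩 is a ReLU MLP with at most C ReLU neurons, that computes pal_n (i.e., T(x) = pal_n(x) for every x ∈ {0,1}^n). -/

import Mathlib

/-- A 1-layer single-token output transformer of embedding dimension `d`
for input length `n` and alphabet `S`: a positional encoding `p`, an initial
value vector `h` of the output token, key and query matrices `K`, `Q`,
and an output function `N`. -/
structure Transformer (n d : ℕ) (S : Type*) where
  /-- positional encoding -/
  p : Fin n → S → (Fin d → ℝ)
  /-- initial value vector of the output token -/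
  h : Fin d → ℝ
  /-- key matrix -/
  K : Matrix (Fin d) (Fin d) ℝ
  /-- query matrix -/
  Q : Matrix (Fin d) (Fin d) ℝ
  /-- output function -/
  N : (Fin d → ℝ) → ℝ

/-- The attention weight `e^{⟨K f_i, Q h⟩}` of input token `i`, where `f_i = p(i, x_i)`. -/
noncomputable def Transformer.w {n d : ℕ} {S : Type*} (T : Transformer n d S)
    (x : Fin n → S) (i : Fin n) : ℝ :=
  Real.exp (dotProduct (T.K.mulVec (T.p i (x i))) (T.Q.mulVec T.h))

/-- The output of the transformer on input `x`: it computes the softmax average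
`ĥ = (Σ_i e^{⟨K f_i, Q h⟩} f_i) / (Σ_i e^{⟨K f_i, Q h⟩})` and outputs `1` if
`N (h + ĥ) > 0`, and `0` otherwise. -/
noncomputable def Transformer.output {n d : ℕ} {S : Type*} (T : Transformer n d S)
    (x : Fin n → S) : ℕ :=
  if 0 < T.N (T.h + (∑ i, T.w x i)⁻¹ • ∑ i, T.w x i • T.p i (x i)) then 1 else 0

/-- `IsMLP din dout F m` : the function `F : ℝ^din → ℝ^dout` is computable by a
feedforward circuit composing affine maps over `ℝ` and the coordinatewise ReLU
activation `t ↦ max (t, 0)`, using `m` ReLU gates in total. -/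
inductive IsMLP : (din dout : ℕ) → ((Fin din → ℝ) → (Fin dout → ℝ)) → ℕ → Prop
  | affine {din dout : ℕ} (A : Matrix (Fin dout) (Fin din) ℝ) (b : Fin dout → ℝ) :
      IsMLP din dout (fun x => A.mulVec x + b) 0
  | relu (d : ℕ) : IsMLP d d (fun x i => max (x i) 0) d
  | comp {d₁ d₂ d₃ m₁ m₂ : ℕ} {f : (Fin d₁ → ℝ) → (Fin d₂ → ℝ)}
      {g : (Fin d₂ → ℝ) → (Fin d₃ → ℝ)} :
      IsMLP d₁ d₂ f m₁ → IsMLP d₂ d₃ g m₂ → IsMLP d₁ d₃ (g ∘ f) (m₁ + m₂)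

/-- `N : ℝ^d → ℝ` is a ReLU MLP with `m` ReLU neurons. -/
def IsReLUMLP (d m : ℕ) (N : (Fin d → ℝ) → ℝ) : Prop :=
  ∃ F : (Fin d → ℝ) → (Fin 1 → ℝ), IsMLP d 1 F m ∧ ∀ v, N v = F v 0

/-- The palindrome function `pal_n` on `{0,1}^n`: outputs `1` if `x_i = x_{n+1-i}`
for every `i ∈ {1, …, n}` (here 0-indexed via `Fin.rev`), and `0` otherwise. -/
def pal {n : ℕ} (x : Fin n → Fin 2) : ℕ :=
  if ∀ i : Fin n, x i = x i.rev then 1 else 0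


section PalHelpers
open Finset

/-- Sign encoding of a bit. -/
def zsgn (b : Fin 2) : ℤ := if b = 0 then 1 else -1

lemma zsgn_inj {a b : Fin 2} (h : zsgn a = zsgn b) : a = b := by
  fin_cases a <;> fin_cases b <;> simp_all [zsgn]

lemma zsgn_cases (b : Fin 2) : zsgn b = 1 ∨ zsgn b = -1 := by
  fin_cases b <;> simp [zsgn]

/-- Antisymmetric positional weights. -/
def wgt (n : ℕ) (i : Fin n) : ℤ :=
  if i.val < i.rev.val then 4 ^ i.val
  else if i.rev.val < i.val then -(4 ^ i.rev.val) else 0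

lemma wgt_rev (n : ℕ) (i : Fin n) : wgt n i.rev = -(wgt n i) := by
  unfold wgt
  rw [Fin.rev_rev]
  rcases lt_trichotomy i.val i.rev.val with h | h | h
  · have h1 : ¬ i.rev.val < i.val := by omega
    simp only [if_pos h, if_neg h1]
  · have h1 : ¬ i.rev.val < i.val := by omega
    have h2 : ¬ i.val < i.rev.val := by omega
    simp only [if_neg h1, if_neg h2]; ring
  · have h2 : ¬ i.val < i.rev.val := by omega
    simp only [if_pos h, if_neg h2]; ring

lemma sum_rev_neg {n : ℕ} (g : Fin n → ℤ) (hg : ∀ i, g i.rev = -g i) : ∑ i, g i = 0 := by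
  have h1 : ∑ i : Fin n, g i.rev = ∑ i, g i :=
    Fintype.sum_bijective Fin.rev Fin.rev_bijective _ _ (fun _ => rfl)
  simp only [hg, Finset.sum_neg_distrib] at h1
  omega

lemma digits_zero : ∀ (k : ℕ) (ε : ℕ → ℤ), (∀ i, ε i = -2 ∨ ε i = 0 ∨ ε i = 2) →
    (∑ i ∈ Finset.range k, ε i * 4 ^ i) = 0 → ∀ i < k, ε i = 0 := by
  intro k
  induction k with
  | zero => intro ε _ _ i hi; omega
  | succ k ih =>
    intro ε hε hsum i hi
    rw [Finset.sum_range_succ'] at hsum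
    have h4 : ∑ j ∈ Finset.range k, ε (j + 1) * 4 ^ (j + 1) =
        (∑ j ∈ Finset.range k, ε (j + 1) * 4 ^ j) * 4 := by
      rw [Finset.sum_mul]
      apply Finset.sum_congr rfl
      intro j _
      rw [pow_succ]; ring
    rw [h4] at hsum
    set T := ∑ j ∈ Finset.range k, ε (j + 1) * 4 ^ j with hT
    have hε0 := hε 0
    have hz : ε 0 = 0 ∧ T = 0 := by simp at hsum; omega
    rcases Nat.eq_zero_or_pos i with rfl | hpos
    · exact hz.1
    · obtain ⟨j, rfl⟩ := Nat.exists_eq_add_of_lt hpos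
      simp only [Nat.zero_add] at *
      exact ih (fun m => ε (m + 1)) (fun m => hε (m + 1)) hz.2 j (by omega)

/-- The signed sum detecting palindromes. -/
def Ssum (n : ℕ) (x : Fin n → Fin 2) : ℤ := ∑ i, zsgn (x i) * wgt n i

def dgt (n : ℕ) (x : Fin n → Fin 2) (i : Fin n) : ℤ :=
  (if i.val < i.rev.val then zsgn (x i) - zsgn (x i.rev) else 0) * 4 ^ i.val

lemma Ssum_eq_digits (n : ℕ) (x : Fin n → Fin 2) : Ssum n x = ∑ i, dgt n x i := by
  have key : ∑ i : Fin n, (zsgn (x i) * wgt n i - dgt n x i) = 0 := by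
    apply sum_rev_neg
    intro i
    show zsgn (x i.rev) * wgt n i.rev - dgt n x i.rev = -(zsgn (x i) * wgt n i - dgt n x i)
    unfold dgt wgt
    rw [Fin.rev_rev]
    rcases lt_trichotomy i.val i.rev.val with h | h | h
    · have h1 : ¬ i.rev.val < i.val := by omega
      simp only [if_pos h, if_neg h1]; ring
    · have h1 : ¬ i.rev.val < i.val := by omega
      have h2 : ¬ i.val < i.rev.val := by omega
      simp only [if_neg h1, if_neg h2]; ring
    · have h2 : ¬ i.val < i.rev.val := by omega
      simp only [if_pos h, if_neg h2]; ring
  have hsub := Finset.sum_sub_distrib (s := (univ : Finset (Fin n)))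
    (f := fun i => zsgn (x i) * wgt n i) (g := fun i => dgt n x i)
  unfold Ssum
  omega

lemma Ssum_zero_iff (n : ℕ) (x : Fin n → Fin 2) :
    Ssum n x = 0 ↔ ∀ i : Fin n, x i = x i.rev := by
  constructor
  · intro h0
    rw [Ssum_eq_digits] at h0
    set ε : ℕ → ℤ := fun j => if h : j < n then
      (if (⟨j, h⟩ : Fin n).val < (⟨j, h⟩ : Fin n).rev.val then
        zsgn (x ⟨j, h⟩) - zsgn (x (⟨j, h⟩ : Fin n).rev) else 0) else 0 with hε
    have hεval : ∀ i : Fin n, ε i.val =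
        if i.val < i.rev.val then zsgn (x i) - zsgn (x i.rev) else 0 := by
      intro i
      simp only [hε, dif_pos i.isLt]
    have hsum : ∑ i : Fin n, dgt n x i = ∑ j ∈ range n, ε j * 4 ^ j := by
      rw [← Fin.sum_univ_eq_sum_range (fun j => ε j * 4 ^ j) n]
      apply Finset.sum_congr rfl
      intro i _
      rw [hεval i]
      rfl
    have hcases : ∀ j, ε j = -2 ∨ ε j = 0 ∨ ε j = 2 := by
      intro j
      simp only [hε]
      split
      · rename_i hj
        split
        · rcases zsgn_cases (x ⟨j, hj⟩) with h1 | h1 <;>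
            rcases zsgn_cases (x (Fin.rev ⟨j, hj⟩)) with h2 | h2 <;> omega
        · omega
      · omega
    have hall := digits_zero n ε hcases (by rw [← hsum]; exact h0)
    intro i
    rcases lt_trichotomy i.val i.rev.val with h | h | h
    · have hv := hall i.val i.isLt
      rw [hεval i, if_pos h] at hv
      exact zsgn_inj (by omega)
    · have : i = i.rev := Fin.ext h
      rw [← this]
    · have h' : i.rev.val < i.rev.rev.val := by rw [Fin.rev_rev]; omega
      have hv := hall i.rev.val i.rev.isLt
      rw [hεval i.rev, if_pos h'] at hv
      have h3 := zsgn_inj (a := x i.rev) (b := x i.rev.rev) (by omega)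
      rw [Fin.rev_rev] at h3
      exact h3.symm
  · intro hpal
    apply sum_rev_neg
    intro i
    show zsgn (x i.rev) * wgt n i.rev = -(zsgn (x i) * wgt n i)
    rw [← hpal i, wgt_rev]
    ring

/-- The palindrome transformer. -/
noncomputable def palT (n : ℕ) : Transformer n 1 (Fin 2) where
  p i b := fun _ => (n : ℝ) * ((zsgn b * wgt n i : ℤ) : ℝ)
  h := 0
  K := 0
  Q := 0
  N v := 1 - max (v 0) 0 - max (-(v 0)) 0

lemma palT_mlp (n : ℕ) : IsReLUMLP 1 2 (palT n).N := by
  set A1 : Matrix (Fin 2) (Fin 1) ℝ := Matrix.of fun i _ => if i = 0 then 1 else -1 with hA1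
  set A2 : Matrix (Fin 1) (Fin 2) ℝ := Matrix.of fun _ _ => -1 with hA2
  refine ⟨(fun y => A2.mulVec y + (fun _ => 1)) ∘
    ((fun y i => max (y i) 0) ∘ (fun x => A1.mulVec x + 0)), ?_, ?_⟩
  · have h1 := IsMLP.affine A1 0
    have h2 := IsMLP.relu 2
    have h3 := IsMLP.affine A2 (fun _ => (1:ℝ))
    exact (h1.comp h2).comp h3
  · intro v
    show 1 - max (v 0) 0 - max (-(v 0)) 0 = _
    simp only [Function.comp, Matrix.mulVec, dotProduct, hA1, hA2,
      Fin.sum_univ_two, Fin.sum_univ_one, Matrix.of_apply, Pi.add_apply, Pi.zero_apply]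
    norm_num
    ring

lemma palT_output (n : ℕ) (hn : 1 ≤ n) (x : Fin n → Fin 2) :
    (palT n).output x = if Ssum n x = 0 then 1 else 0 := by
  have hw : ∀ i, (palT n).w x i = 1 := by
    intro i
    simp [Transformer.w, palT, Matrix.mulVec_zero, dotProduct_zero]
  have hn0 : (n : ℝ) ≠ 0 := by positivity
  have harg : ((palT n).h + (∑ i, (palT n).w x i)⁻¹ • ∑ i, (palT n).w x i • (palT n).p i (x i)) 0
      = ((Ssum n x : ℤ) : ℝ) := by
    simp only [hw, one_smul, Pi.add_apply, Pi.smul_apply, Finset.sum_apply]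
    have hc : ∑ _i : Fin n, (1 : ℝ) = (n : ℝ) := by simp
    rw [hc]
    show (0 : ℝ) + ((n:ℝ))⁻¹ • (∑ i : Fin n, (n : ℝ) * ((zsgn (x i) * wgt n i : ℤ) : ℝ)) = _
    rw [← Finset.mul_sum]
    field_simp
    rw [Ssum]
    push_cast
    rw [smul_eq_mul, zero_add, one_div, ← mul_assoc, inv_mul_cancel₀ hn0, one_mul]
  unfold Transformer.output
  rw [show ∀ v : Fin 1 → ℝ, (palT n).N v = 1 - max (v 0) 0 - max (-(v 0)) 0 from fun _ => rfl] at *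
  rw [harg]
  set s : ℝ := ((Ssum n x : ℤ) : ℝ) with hs
  have habs : max s 0 + max (-s) 0 = |s| := by
    rcases le_total s 0 with h | h
    · rw [max_eq_right h, max_eq_left (by linarith), abs_of_nonpos h]; ring
    · rw [max_eq_left h, max_eq_right (by linarith), abs_of_nonneg h]; ring
  have hiff : (0 < 1 - max s 0 - max (-s) 0) ↔ Ssum n x = 0 := by
    rw [show 1 - max s 0 - max (-s) 0 = 1 - (max s 0 + max (-s) 0) by ring, habs]
    rw [sub_pos, hs]
    rw [show |((Ssum n x : ℤ) : ℝ)| = ((|Ssum n x| : ℤ) : ℝ) by push_cast; ring]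
    rw [show (1 : ℝ) = ((1 : ℤ) : ℝ) by norm_num, Int.cast_lt, abs_lt]
    omega
  exact if_congr hiff rfl rfl

end PalHelpers

/-- There exists a constant `C` such that for every `n ≥ 1` there is a 1-layer
single-token output transformer for input length `n` and alphabet `{0,1}`, with
embedding dimension `d ≤ C` and whose output function is a ReLU MLP with at most
`C` ReLU neurons, that computes `pal_n`. -/
theorem small_one_layer_transformer_computes_pal :
    ∃ C : ℕ, ∀ n : ℕ, 1 ≤ n →
      ∃ (d m : ℕ) (T : Transformer n d (Fin 2)),
        d ≤ C ∧ m ≤ C ∧ IsReLUMLP d m T.N ∧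
        ∀ x : Fin n → Fin 2, T.output x = pal x := by
  refine ⟨2, fun n hn => ⟨1, 2, palT n, by norm_num, le_refl 2, palT_mlp n, fun x => ?_⟩⟩
  rw [palT_output n hn x, pal]
  rcases (Ssum_zero_iff n x) with ⟨h1, h2⟩
  by_cases hp : ∀ i : Fin n, x i = x i.rev
  · rw [if_pos hp, if_pos (h2 hp)]
  · rw [if_neg hp, if_neg (fun hz => hp (h1 hz))]
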